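/- Let B be a Liquid[1]_* profile over D = {0,1,*}. All rank-minimal consistent certificates of B determine the same outcome X ∈ D^N, namely: X_a = x_a if a is a direct voter; if a is delegating, follow the delegation map d from a: if this chain reaches a direct voter g (before revisiting any agent), then X_a = x_g, and if the chain enters a delegation cycle, then X_a = *. In particular, the MinSum procedure yields a unique outcome on Liquid[1]_* profiles. -/
import Mathlib


namespace LiquidVoting

/-- A Liquid ballot for agent `a`: levels `1, …, k-1` delegate to the pairwise
distinct delegates `d h ∈ N \ {a}` ("copy the vote of `d h`"), and level `k` is
the backup direct vote. -/
structure LiquidBallot (N D : Type*) (a : N) where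
  k : ℕ
  k_pos : 1 ≤ k
  d : ℕ → N
  vote : D
  no_self : ∀ h, 1 ≤ h → h < k → d h ≠ a
  distinct : ∀ h h', 1 ≤ h → h < k → 1 ≤ h' → h' < k → d h = d h' → h = h'

variable {N D : Type*} [Fintype N] [DecidableEq N]

/-- `c` is a certificate for the Liquid profile `B`. -/
def IsCert (B : ∀ a : N, LiquidBallot N D a) (c : N → ℕ) : Prop :=
  ∀ a, 1 ≤ c a ∧ c a ≤ (B a).k

/-- `c` is consistent: there is an enumeration of the agents in which every agent
using a delegation (`c a < k_a`) is preceded by its chosen delegate. -/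
def LConsistent (B : ∀ a : N, LiquidBallot N D a) (c : N → ℕ) : Prop :=
  ∃ σ : Fin (Fintype.card N) ≃ N,
    ∀ a, c a < (B a).k → σ.symm ((B a).d (c a)) < σ.symm a

/-- The three-valued domain `{0, 1, *}`, with `abstain` the abstention `*`. -/
inductive ThreeVote where
  | zero
  | one
  | abstain
deriving DecidableEq

/-- The rank of a certificate: the sum of the used preference levels. -/
def rank (c : N → ℕ) : ℕ := ∑ a, c a

/-- The total delegation map: a delegating agent maps to its (level-1) delegate,
a direct voter maps to itself. -/
def dmap (B : ∀ a : N, LiquidBallot N D a) : N → N :=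
  fun a => if 2 ≤ (B a).k then (B a).d 1 else a

/-- `X` is the outcome determined by the consistent certificate `c`: an agent
whose certificate level is its backup direct vote gets that vote, and a delegating
agent copies the (already determined) vote of its chosen delegate. -/
def OutcomeOf (B : ∀ a : N, LiquidBallot N D a) (c : N → ℕ)
    (X : N → D) : Prop :=
  ∀ a, (c a = (B a).k → X a = (B a).vote) ∧
    (c a < (B a).k → X a = X ((B a).d (c a)))


/-- One step of certificate evaluation: an "active" agent (using a delegation
level) steps to its chosen delegate, an inactive agent stays put. -/
def gstep (B : ∀ a : N, LiquidBallot N D a) (c : N → ℕ) : N → N :=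
  fun b => if c b < (B b).k then (B b).d (c b) else b

/-- Every agent's active chain terminates at an inactive agent. -/
def Terminates (B : ∀ a : N, LiquidBallot N D a) (c : N → ℕ) : Prop :=
  ∀ b, ∃ m, ¬ c ((gstep B c)^[m] b) < (B ((gstep B c)^[m] b)).k

lemma terminates_of_consistent (B : ∀ a : N, LiquidBallot N D a) (c : N → ℕ)
    (h : LConsistent B c) : Terminates B c := by
  obtain ⟨σ, hσ⟩ := h
  suffices h : ∀ n : ℕ, ∀ b : N, (σ.symm b : ℕ) < n →
      ∃ m, ¬ c ((gstep B c)^[m] b) < (B ((gstep B c)^[m] b)).k by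
    exact fun b => h _ b (Nat.lt_succ_self _)
  intro n
  induction n with
  | zero => intro b hb; omega
  | succ n ih =>
    intro b hb
    by_cases hA : c b < (B b).k
    · have hlt : (σ.symm ((B b).d (c b)) : ℕ) < n := by
        have := hσ b hA
        have : (σ.symm ((B b).d (c b)) : ℕ) < (σ.symm b : ℕ) := this
        omega
      obtain ⟨m, hm⟩ := ih _ hlt
      refine ⟨m + 1, ?_⟩
      rwa [Function.iterate_succ_apply, show gstep B c b = (B b).d (c b) from if_pos hA]
    · exact ⟨0, by simpa using hA⟩

lemma consistent_of_terminates (B : ∀ a : N, LiquidBallot N D a) (c : N → ℕ)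
    (h : Terminates B c) : LConsistent B c := by
  classical
  set ht : N → ℕ := fun b => Nat.find (h b) with hht_def
  have hht : ∀ b, c b < (B b).k → ht ((B b).d (c b)) < ht b := by
    intro b hb
    have h0 : ht b ≠ 0 := by
      intro h0
      have hs := Nat.find_spec (h b)
      rw [show Nat.find (h b) = ht b from rfl, h0] at hs
      simp at hs
      omega
    have hstep : gstep B c b = (B b).d (c b) := if_pos hb
    have h1 : ¬ c ((gstep B c)^[ht b - 1] ((B b).d (c b))) <
        (B ((gstep B c)^[ht b - 1] ((B b).d (c b)))).k := by
      have hs := Nat.find_spec (h b)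
      rw [show Nat.find (h b) = ht b from rfl] at hs
      rwa [show ht b = (ht b - 1) + 1 by omega, Function.iterate_succ_apply, hstep] at hs
    have h2 : ht ((B b).d (c b)) ≤ ht b - 1 := Nat.find_le h1
    omega
  set n := Fintype.card N with hn
  let e0 : N ≃ Fin n := Fintype.equivFin N
  set key : N → ℕ := fun b => ht b * n + (e0 b : ℕ) with hkey
  have keylt : ∀ x y : N, ht x < ht y → key x < key y := by
    intro x y hxy
    have hx : (e0 x : ℕ) < n := (e0 x).isLt
    have : ht x * n + n ≤ ht y * n := by
      calc ht x * n + n = (ht x + 1) * n := by ring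
        _ ≤ ht y * n := Nat.mul_le_mul_right n (by omega)
    simp only [hkey]
    omega
  have keyinj : Function.Injective key := by
    intro x y hxy
    have hhteq : ht x = ht y := by
      rcases lt_trichotomy (ht x) (ht y) with h | h | h
      · exact absurd hxy (Nat.ne_of_lt (keylt x y h))
      · exact h
      · exact absurd hxy.symm (Nat.ne_of_lt (keylt y x h))
    have : (e0 x : ℕ) = (e0 y : ℕ) := by
      simp only [hkey] at hxy
      rw [hhteq] at hxy
      omega
    exact e0.injective (Fin.ext this)
  letI : LinearOrder N := LinearOrder.lift' key keyinj
  have hlt_iff : ∀ x y : N, x < y ↔ key x < key y := by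
    intro x y
    constructor
    · intro hxy
      have h1 : key x ≤ key y := le_of_lt hxy
      have h2 : x ≠ y := ne_of_lt hxy
      exact lt_of_le_of_ne h1 (fun h => h2 (keyinj h))
    · intro hxy
      refine lt_of_le_of_ne (show key x ≤ key y from le_of_lt hxy) ?_
      intro h; rw [h] at hxy; omega
  let σ : Fin n ≃o N := monoEquivOfFin N hn.symm
  refine ⟨σ.toEquiv, fun a ha => ?_⟩
  have hkeylt : key ((B a).d (c a)) < key a := keylt _ _ (hht a ha)
  have : (B a).d (c a) < a := (hlt_iff _ _).mpr hkeylt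
  exact (OrderIso.lt_iff_lt σ.symm).mpr this

/-- On Liquid[1]_* profiles (single optional delegation, backup vote `*`), all
rank-minimal consistent certificates determine the same outcome: a direct voter
keeps its vote; a delegating agent whose delegation chain reaches a direct voter
`g` gets `g`'s vote; and a delegating agent whose chain enters a delegation cycle
abstains. In particular `MinSum` yields a unique outcome on such profiles. -/
theorem minSum_unique_outcome_liquid1star
    (B : ∀ a : N, LiquidBallot N ThreeVote a)
    (hB : ∀ a, (B a).k ≤ 2 ∧ ((B a).k = 2 → (B a).vote = ThreeVote.abstain))
    (c : N → ℕ) (hc : IsCert B c) (hcons : LConsistent B c)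
    (hmin : ∀ c', IsCert B c' → LConsistent B c' → rank c ≤ rank c')
    (X : N → ThreeVote) (hX : OutcomeOf B c X) :
    (∀ (a : N) (m : ℕ), (B ((dmap B)^[m] a)).k = 1 →
      X a = (B ((dmap B)^[m] a)).vote) ∧
    (∀ a : N, (∀ m : ℕ, (B ((dmap B)^[m] a)).k ≠ 1) →
      X a = ThreeVote.abstain) := by
  classical
  have hterm := terminates_of_consistent B c hcons
  -- Rank-minimality forces a delegating agent whose chain reaches a direct
  have claim1 : ∀ a : N, (B a).k = 2 → (∃ m, (B ((dmap B)^[m] a)).k = 1) →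
      c a = 1 := by
    intro a hka hex
    by_contra hne
    have hca : c a = 2 := by have := hc a; omega
    set c' : N → ℕ := Function.update c a 1 with hc'def
    have hcert' : IsCert B c' := by
      intro b
      by_cases hb : b = a
      · subst hb
        simp only [hc'def, Function.update_self]
        exact ⟨le_refl 1, (B b).k_pos⟩
      · simp only [hc'def, Function.update_of_ne hb]
        exact hc b
    -- the chain from `a` under `c'` terminates
    have hT1 : ∃ m, ¬ c' ((gstep B c')^[m] a) < (B ((gstep B c')^[m] a)).k := by
      obtain ⟨p, hp⟩ := hex
      have main : ∀ j, (∃ m, ¬ c' ((gstep B c')^[m] a) < (B ((gstep B c')^[m] a)).k) ∨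
          (gstep B c')^[j] a = (dmap B)^[j] a := by
        intro j
        induction j with
        | zero => right; simp
        | succ j ih =>
          rcases ih with h | h
          · exact Or.inl h
          · set x := (gstep B c')^[j] a with hx_def
            by_cases hx : c' x < (B x).k
            · right
              have hcx1 : c' x = 1 := by have := hcert' x; have := (hB x).1; omega
              have hkx2 : (B x).k = 2 := by have := hcert' x; have := (hB x).1; omega
              have hgx : gstep B c' x = dmap B x := by
                rw [gstep, if_pos hx, hcx1, dmap, if_pos (by omega)]
              rw [Function.iterate_succ_apply', Function.iterate_succ_apply',
                ← hx_def, hgx, h]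
            · exact Or.inl ⟨j, hx⟩
      rcases main p with h | h
      · exact h
      · refine ⟨p, ?_⟩
        rw [h]
        have h1 := hcert' ((dmap B)^[p] a)
        omega
    -- termination for all agents under `c'`
    have hT : Terminates B c' := by
      have aux : ∀ m, ∀ b : N,
          ¬ c ((gstep B c)^[m] b) < (B ((gstep B c)^[m] b)).k →
          ∃ m', ¬ c' ((gstep B c')^[m'] b) < (B ((gstep B c')^[m'] b)).k := by
        intro m
        induction m with
        | zero =>
          intro b hb
          by_cases hba : b = a
          · subst hba; exact hT1
          · refine ⟨0, ?_⟩
            simpa [hc'def, Function.update_of_ne hba] using hb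
        | succ m ih =>
          intro b hb
          by_cases hba : b = a
          · subst hba; exact hT1
          by_cases hact : c b < (B b).k
          · have hg : gstep B c b = (B b).d (c b) := if_pos hact
            have hg' : gstep B c' b = gstep B c b := by
              simp [gstep, hc'def, Function.update_of_ne hba]
            rw [Function.iterate_succ_apply] at hb
            obtain ⟨m', hm'⟩ := ih _ hb
            refine ⟨m' + 1, ?_⟩
            rw [Function.iterate_succ_apply, hg']
            exact hm'
          · refine ⟨0, ?_⟩
            simpa [hc'def, Function.update_of_ne hba] using hact
      intro b
      obtain ⟨m, hm⟩ := hterm b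
      exact aux m b hm
    have hcons' := consistent_of_terminates B c' hT
    have hrank := hmin c' hcert' hcons'
    have hlt : rank c' < rank c := by
      unfold rank
      rw [hc'def, Finset.sum_update_of_mem (Finset.mem_univ a),
        Finset.sdiff_singleton_eq_erase,
        ← Finset.add_sum_erase Finset.univ c (Finset.mem_univ a)]
      omega
    omega
  have hdmap1 : ∀ b : N, (B b).k = 1 → dmap B b = b := by
    intro b h; simp [dmap, h]
  -- first conjunct
  have claims : ∀ m, ∀ a : N, (B ((dmap B)^[m] a)).k = 1 →
      X a = (B ((dmap B)^[m] a)).vote := by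
    intro m
    induction m with
    | zero =>
      intro a ha
      simp only [Function.iterate_zero, id] at ha ⊢
      have hca : c a = (B a).k := by have := hc a; omega
      exact (hX a).1 hca
    | succ m ih =>
      intro a ha
      rw [Function.iterate_succ_apply] at ha ⊢
      by_cases hk : (B a).k = 1
      · rw [hdmap1 a hk] at ha ⊢
        exact ih a ha
      · have hk2 : (B a).k = 2 := by
          have := (hB a).1; have := (B a).k_pos; omega
        have hca : c a = 1 := claim1 a hk2 ⟨m + 1, by rwa [Function.iterate_succ_apply]⟩
        have hact : c a < (B a).k := by omega
        have hd : (B a).d (c a) = dmap B a := by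
          rw [hca, dmap, if_pos (by omega)]
        rw [(hX a).2 hact, hd]
        exact ih _ ha
  -- second conjunct
  have claim3 : ∀ a : N, (∀ m, (B ((dmap B)^[m] a)).k ≠ 1) →
      X a = ThreeVote.abstain := by
    have aux : ∀ m, ∀ a : N, (∀ p, (B ((dmap B)^[p] a)).k ≠ 1) →
        ¬ c ((gstep B c)^[m] a) < (B ((gstep B c)^[m] a)).k →
        X a = ThreeVote.abstain := by
      intro m
      induction m with
      | zero =>
        intro a hall _
        have hk2 : (B a).k = 2 := by
          have := hall 0
          simp only [Function.iterate_zero, id] at this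
          have := (hB a).1; have := (B a).k_pos; omega
        have hca : c a = (B a).k := by
          by_cases hact : c a < (B a).k
          · -- rule this out using claim1? no: here m = 0 means a itself inactive
            exfalso
            have h0 := ‹¬ c ((gstep B c)^[0] a) < (B ((gstep B c)^[0] a)).k›
            simp only [Function.iterate_zero, id] at h0
            exact h0 hact
          · have := hc a; omega
        rw [(hX a).1 hca, (hB a).2 hk2]
      | succ m ih =>
        intro a hall hm
        by_cases hact : c a < (B a).k
        · have hca1 : c a = 1 := by have := hc a; have := (hB a).1; omega
          have hk2 : (B a).k = 2 := by have := hc a; have := (hB a).1; omega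
          have hg : gstep B c a = dmap B a := by
            rw [gstep, if_pos hact, hca1, dmap, if_pos (by omega)]
          have hd : (B a).d (c a) = dmap B a := by
            rw [hca1, dmap, if_pos (by omega)]
          rw [(hX a).2 hact, hd]
          apply ih (dmap B a)
          · intro p
            rw [← Function.iterate_succ_apply]
            exact hall (p + 1)
          · rwa [Function.iterate_succ_apply, hg] at hm
        · have hk2 : (B a).k = 2 := by
            have := hall 0
            simp only [Function.iterate_zero, id] at this
            have := (hB a).1; have := (B a).k_pos; omega
          have hca : c a = (B a).k := by have := hc a; omega
          rw [(hX a).1 hca, (hB a).2 hk2]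
    intro a hall
    obtain ⟨m, hm⟩ := hterm a
    exact aux m a hall hm
  exact ⟨fun a m => claims m a, claim3⟩

end LiquidVoting
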